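/- Let β, ρ > 0 and λ < ρ be real numbers. Then there exists a constant D > 0 such that for all real t₁ < t₂, the oscillatory integral I(t₁,t₂) = ∫_{t₁}^{t₂} e^{λt} e^{iβ e^{ρt}} dt satisfies |I(t₁,t₂)| ≤ D (e^{(λ-ρ)t₁} + e^{(λ-ρ)t₂}). In fact one may take D = 1/(ρβ). -/

import Mathlib

open MeasureTheory intervalIntegral Set

noncomputable def oscG (β ρ r : ℝ) (t s : ℝ) : ℂ :=
  (s ^ (r-1) : ℝ) • ((Real.exp (ρ*t) : ℂ) *
    Complex.exp ((Complex.I - s) * (β * Real.exp (ρ*t) : ℝ)))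

lemma osc_split (s u : ℝ) : Complex.exp ((Complex.I - s) * (u:ℂ)) =
    Complex.exp (Complex.I * u) * (Real.exp (-(u*s)) : ℝ) := by
  rw [Complex.ofReal_exp, ← Complex.exp_add]
  congr 1
  push_cast
  ring

lemma oscG_decomp (β ρ r t s : ℝ) : oscG β ρ r t s =
    (s ^ (r-1) * Real.exp (-(β * Real.exp (ρ*t) * s))) •
      ((Real.exp (ρ*t) : ℂ) * Complex.exp (Complex.I * (β * Real.exp (ρ*t) : ℝ))) := by
  rw [oscG, osc_split, Complex.real_smul, Complex.real_smul]
  push_cast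
  ring

lemma oscG_norm (β ρ r : ℝ) (t : ℝ) {s : ℝ} (hs : 0 < s) :
    ‖oscG β ρ r t s‖ = s ^ (r-1) * Real.exp (-(β * Real.exp (ρ*t) * s)) * Real.exp (ρ*t) := by
  rw [oscG_decomp, norm_smul]
  rw [norm_mul (α := ℂ), Complex.norm_real,
    Complex.norm_exp]
  have h1 : (Complex.I * ((β * Real.exp (ρ*t) : ℝ) : ℂ)).re = 0 := by
    rw [Complex.mul_re, Complex.I_re, Complex.I_im, Complex.ofReal_im]; ring
  rw [h1, Real.exp_zero, Real.norm_eq_abs, Real.norm_eq_abs,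
    _root_.abs_of_nonneg (by positivity : (0:ℝ) ≤ s ^ (r-1) * Real.exp (-(β * Real.exp (ρ*t) * s))),
    _root_.abs_of_nonneg (Real.exp_nonneg _)]
  ring

lemma osc_key_integrable {a c : ℝ} (ha : 0 < a) (hc : 0 < c) :
    IntegrableOn (fun s : ℝ => s ^ (a - 1) * Real.exp (-(c * s))) (Ioi 0) := by
  have h := integrableOn_rpow_mul_exp_neg_mul_rpow (by linarith : (-1:ℝ) < a - 1) (by norm_num : (0:ℝ) < 1) hc
  refine h.congr_fun (fun x hx => ?_) measurableSet_Ioi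
  dsimp only
  rw [Real.rpow_one, neg_mul]

lemma osc_gamma_val {a c : ℝ} (ha : 0 < a) (hc : 0 < c) :
    ∫ s in Ioi 0, s ^ (a - 1) * Real.exp (-(c * s)) = Real.Gamma a * c ^ (-a) := by
  rw [Real.integral_rpow_mul_exp_neg_mul_Ioi ha hc, one_div, ← Real.rpow_neg_one,
    ← Real.rpow_mul hc.le, neg_one_mul, mul_comm]

lemma oscG_integrableOn (β ρ : ℝ) {r : ℝ} (hβ : 0 < β) (hr : 0 < r) (t : ℝ) :
    IntegrableOn (fun s => oscG β ρ r t s) (Ioi 0) := by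
  have h := (osc_key_integrable hr (mul_pos hβ (Real.exp_pos (ρ*t)))).smul_const
    ((Real.exp (ρ*t) : ℂ) * Complex.exp (Complex.I * (β * Real.exp (ρ*t) : ℝ)))
  have h' : IntegrableOn (fun s : ℝ => (s ^ (r-1) * Real.exp (-(β * Real.exp (ρ*t) * s))) •
      ((Real.exp (ρ*t) : ℂ) * Complex.exp (Complex.I * (β * Real.exp (ρ*t) : ℝ)))) (Ioi 0) := h
  exact h'.congr_fun (fun s _ => (oscG_decomp β ρ r t s).symm) measurableSet_Ioi

lemma oscG_integral (β ρ : ℝ) {r : ℝ} (hβ : 0 < β) (hr : 0 < r) (t : ℝ) :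
    ∫ s in Ioi 0, oscG β ρ r t s = (Real.Gamma r * (β * Real.exp (ρ*t)) ^ (-r)) •
      ((Real.exp (ρ*t) : ℂ) * Complex.exp (Complex.I * (β * Real.exp (ρ*t) : ℝ))) := by
  simp_rw [oscG_decomp]
  rw [_root_.integral_smul_const, osc_gamma_val hr (mul_pos hβ (Real.exp_pos _))]

lemma ftc_inner (β ρ s : ℝ) (hβ : 0 < β) (hρ : 0 < ρ) (t₁ t₂ : ℝ) :
    ∫ t in t₁..t₂, ((Real.exp (ρ*t) : ℂ) * Complex.exp ((Complex.I - s) * (β * Real.exp (ρ*t) : ℝ))) =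
      ((β : ℂ)*ρ*(Complex.I - s))⁻¹ * (Complex.exp ((Complex.I - s) * (β * Real.exp (ρ*t₂) : ℝ))
        - Complex.exp ((Complex.I - s) * (β * Real.exp (ρ*t₁) : ℝ))) := by
  have hIs : (Complex.I - (s:ℂ)) ≠ 0 := by
    intro h
    have := congrArg Complex.im h
    simp at this
  have key : ∀ t : ℝ, HasDerivAt (fun t : ℝ => ((β : ℂ)*ρ*(Complex.I - s))⁻¹ *
      Complex.exp ((Complex.I - s) * (β * Real.exp (ρ*t) : ℝ)))
      ((Real.exp (ρ*t) : ℂ) * Complex.exp ((Complex.I - s) * (β * Real.exp (ρ*t) : ℝ))) t := by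
    intro t
    have h0 : HasDerivAt (fun t : ℝ => (t : ℂ)) 1 t := by
      simpa using (hasDerivAt_id t).ofReal_comp
    have h1 : HasDerivAt (fun t : ℝ => (ρ : ℂ) * t) ρ t := by
      simpa using h0.const_mul (ρ : ℂ)
    have h5 := ((h1.cexp.const_mul ((Complex.I - s) * β)).cexp).const_mul
      (((β : ℂ)*ρ*(Complex.I - s))⁻¹)
    have harg : ∀ t : ℝ, (Complex.I - s) * (β:ℂ) * Complex.exp ((ρ:ℂ)*t)
        = (Complex.I - s) * ((β * Real.exp (ρ*t) : ℝ) : ℂ) := by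
      intro t; push_cast [Complex.ofReal_exp]; ring
    simp only [harg] at h5
    have hder : ((β : ℂ)*ρ*(Complex.I - s))⁻¹ *
        (Complex.exp ((Complex.I - s) * ((β * Real.exp (ρ*t) : ℝ) : ℂ)) *
          ((Complex.I - s) * β * (Complex.exp ((ρ:ℂ)*t) * ρ)))
        = (Real.exp (ρ*t) : ℂ) * Complex.exp ((Complex.I - s) * (β * Real.exp (ρ*t) : ℝ)) := by
      have hc : Complex.exp ((ρ:ℂ)*t) = ((Real.exp (ρ*t) : ℝ) : ℂ) := by
        push_cast [Complex.ofReal_exp]; ring_nf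
      have hC : ((β:ℂ)*ρ*(Complex.I - s)) ≠ 0 := mul_ne_zero (mul_ne_zero
        (Complex.ofReal_ne_zero.2 hβ.ne') (Complex.ofReal_ne_zero.2 hρ.ne')) hIs
      rw [hc]
      have hβ' : (β:ℂ) ≠ 0 := Complex.ofReal_ne_zero.2 hβ.ne'
      have hρ' : (ρ:ℂ) ≠ 0 := Complex.ofReal_ne_zero.2 hρ.ne'
      field_simp
    exact hder ▸ h5
  rw [intervalIntegral.integral_eq_sub_of_hasDerivAt (fun t _ => key t)
    ((by fun_prop : Continuous fun t : ℝ => ((Real.exp (ρ*t) : ℂ) *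
      Complex.exp ((Complex.I - s) * (β * Real.exp (ρ*t) : ℝ)))).intervalIntegrable _ _)]
  ring

lemma osc_pow (β ρ l r : ℝ) (hβ : 0 < β) (hρ : 0 < ρ) (hrr : r = (ρ-l)/ρ) (t : ℝ) :
    β ^ r * (β * Real.exp (ρ*t)) ^ (-r) = Real.exp ((l-ρ)*t) := by
  rw [Real.mul_rpow hβ.le (Real.exp_pos _).le, ← Real.exp_mul, ← mul_assoc,
    ← Real.rpow_add hβ, add_neg_cancel, Real.rpow_zero, one_mul]
  congr 1
  rw [hrr]
  field_simp
  ring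

lemma osc_rep (β ρ l r : ℝ) (hβ : 0 < β) (hρ : 0 < ρ) (hl : l < ρ) (hrr : r = (ρ-l)/ρ) (t : ℝ) :
    (Real.exp (l * t) : ℂ) * Complex.exp (Complex.I * β * Real.exp (ρ * t)) =
      (β ^ r / Real.Gamma r) • ∫ s in Ioi 0, oscG β ρ r t s := by
  have hr : 0 < r := hrr ▸ div_pos (by linarith) hρ
  have hΓ : 0 < Real.Gamma r := Real.Gamma_pos_of_pos hr
  rw [oscG_integral β ρ hβ hr t, smul_smul]
  have hcoef : β ^ r / Real.Gamma r * (Real.Gamma r * (β * Real.exp (ρ*t)) ^ (-r))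
      = Real.exp ((l-ρ)*t) := by
    rw [← osc_pow β ρ l r hβ hρ hrr t]
    field_simp
  rw [hcoef, Complex.real_smul]
  have e1 : ((Real.exp (l*t) : ℝ) : ℂ) = ((Real.exp ((l-ρ)*t) * Real.exp (ρ*t) : ℝ) : ℂ) := by
    norm_cast
    rw [← Real.exp_add]
    congr 1
    ring
  have e2 : Complex.I * (β:ℂ) * ((Real.exp (ρ*t) : ℝ) : ℂ)
      = Complex.I * ((β * Real.exp (ρ*t) : ℝ) : ℂ) := by push_cast; ring
  rw [e1, e2]
  push_cast
  ring

/-- Oscillatory integral bound: for `β, ρ > 0` and `λ < ρ`, there is `D > 0`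
(one may take `D = 1/(ρβ)`) such that for all `t₁ < t₂`,
`‖∫_{t₁}^{t₂} e^{λ t} e^{i β e^{ρ t}} dt‖ ≤ D (e^{(λ-ρ)t₁} + e^{(λ-ρ)t₂})`. -/
theorem oscillatory_integral_bound (β ρ l : ℝ) (hβ : 0 < β) (hρ : 0 < ρ) (hl : l < ρ) :
    ∃ D : ℝ, 0 < D ∧ D = 1 / (ρ * β) ∧
      ∀ t₁ t₂ : ℝ, t₁ < t₂ →
        ‖∫ t in t₁..t₂,
            (Real.exp (l * t) : ℂ) * Complex.exp (Complex.I * β * Real.exp (ρ * t))‖ ≤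
          D * (Real.exp ((l - ρ) * t₁) + Real.exp ((l - ρ) * t₂)) := by
  refine ⟨1/(ρ*β), by positivity, rfl, ?_⟩
  intro t₁ t₂ ht
  set r : ℝ := (ρ-l)/ρ with hrdef
  have hr : 0 < r := div_pos (by linarith) hρ
  have hΓ : 0 < Real.Gamma r := Real.Gamma_pos_of_pos hr
  have hu : ∀ t : ℝ, 0 < β * Real.exp (ρ*t) := fun t => mul_pos hβ (Real.exp_pos _)
  -- Step 1: rewrite the integrand
  have step1 : (∫ t in t₁..t₂, (Real.exp (l*t) : ℂ) * Complex.exp (Complex.I * β * Real.exp (ρ*t)))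
      = (β ^ r / Real.Gamma r) • ∫ t in t₁..t₂, (∫ s in Ioi 0, oscG β ρ r t s) := by
    rw [← intervalIntegral.integral_smul]
    exact intervalIntegral.integral_congr fun t _ => osc_rep β ρ l r hβ hρ hl hrdef t
  -- Step 2: Fubini
  have hprod : Integrable (Function.uncurry fun t s => oscG β ρ r t s)
      ((volume.restrict (Ioc t₁ t₂)).prod (volume.restrict (Ioi 0))) := by
    have hmeas : AEStronglyMeasurable (Function.uncurry fun t s => oscG β ρ r t s)
        ((volume.restrict (Ioc t₁ t₂)).prod (volume.restrict (Ioi 0))) := by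
      apply Measurable.aestronglyMeasurable
      unfold oscG Function.uncurry
      fun_prop
    rw [MeasureTheory.integrable_prod_iff hmeas]
    constructor
    · exact ae_of_all _ fun t => oscG_integrableOn β ρ hβ hr t
    · have hnormint : ∀ t : ℝ, (∫ s in Ioi 0, ‖oscG β ρ r t s‖)
          = Real.Gamma r * (β*Real.exp (ρ*t)) ^ (-r) * Real.exp (ρ*t) := by
        intro t
        rw [setIntegral_congr_fun measurableSet_Ioi (fun s hs => oscG_norm β ρ r t hs),
          MeasureTheory.integral_mul_const, osc_gamma_val hr (hu t)]
      have hcont : Continuous fun t : ℝ =>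
          Real.Gamma r * (β*Real.exp (ρ*t)) ^ (-r) * Real.exp (ρ*t) := by
        refine Continuous.mul (Continuous.mul continuous_const ?_) (by fun_prop)
        exact Continuous.rpow_const (by fun_prop) (fun t => Or.inl (hu t).ne')
      exact (hcont.integrableOn_Ioc).congr (ae_of_all _ fun t => (hnormint t).symm)
  have step2 : (∫ t in t₁..t₂, ∫ s in Ioi 0, oscG β ρ r t s)
      = ∫ s in Ioi 0, ∫ t in Ioc t₁ t₂, oscG β ρ r t s := by
    rw [intervalIntegral.integral_of_le ht.le]
    exact MeasureTheory.integral_integral_swap hprod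
  -- Step 3: value of the inner integral
  have hinner : ∀ s ∈ Ioi (0:ℝ), (∫ t in Ioc t₁ t₂, oscG β ρ r t s)
      = (s ^ (r-1) : ℝ) • (((β:ℂ)*ρ*(Complex.I - s))⁻¹ *
          (Complex.exp ((Complex.I - s) * (β * Real.exp (ρ*t₂) : ℝ))
            - Complex.exp ((Complex.I - s) * (β * Real.exp (ρ*t₁) : ℝ)))) := by
    intro s hs
    rw [← intervalIntegral.integral_of_le ht.le]
    unfold oscG
    rw [intervalIntegral.integral_smul, ftc_inner β ρ s hβ hρ t₁ t₂]
  -- Step 4: bound the inner integral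
  set Φ : ℝ → ℝ := fun s => (1/(ρ*β)) * (s^(r-1) * Real.exp (-(β*Real.exp (ρ*t₁)*s))
    + s^(r-1) * Real.exp (-(β*Real.exp (ρ*t₂)*s))) with hΦdef
  have hΦint : IntegrableOn Φ (Ioi 0) :=
    (((osc_key_integrable hr (hu t₁)).add (osc_key_integrable hr (hu t₂))).const_mul _)
  have habsexp : ∀ s t : ℝ, ‖Complex.exp ((Complex.I - s) * ((β * Real.exp (ρ*t) :ℝ):ℂ))‖
      = Real.exp (-(β*Real.exp (ρ*t)*s)) := by
    intro s t
    rw [Complex.norm_exp]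
    congr 1
    rw [Complex.mul_re, Complex.sub_re, Complex.sub_im, Complex.I_re, Complex.I_im,
      Complex.ofReal_re, Complex.ofReal_im, Complex.ofReal_re, Complex.ofReal_im]
    ring
  have hbound : ∀ s ∈ Ioi (0:ℝ), ‖∫ t in Ioc t₁ t₂, oscG β ρ r t s‖ ≤ Φ s := by
    intro s hs
    rw [hinner s hs, norm_smul, Real.norm_eq_abs,
      _root_.abs_of_nonneg (Real.rpow_nonneg (le_of_lt hs) _)]
    have hinv : ‖((β:ℂ)*ρ*(Complex.I - s))⁻¹‖ ≤ 1/(ρ*β) := by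
      rw [norm_inv, norm_mul, norm_mul, Complex.norm_real, Complex.norm_real,
        Real.norm_eq_abs, Real.norm_eq_abs, _root_.abs_of_pos hβ, _root_.abs_of_pos hρ]
      have h1le : 1 ≤ ‖Complex.I - (s:ℂ)‖ := by
        have h := Complex.abs_im_le_norm (Complex.I - (s:ℂ))
        simpa using h
      rw [one_div]
      apply inv_anti₀ (by positivity)
      calc ρ * β = β * ρ * 1 := by ring
        _ ≤ β * ρ * ‖Complex.I - (s:ℂ)‖ := by
            apply mul_le_mul_of_nonneg_left h1le (by positivity)
    have hdiff : ‖Complex.exp ((Complex.I - s) * (β * Real.exp (ρ*t₂) : ℝ))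
        - Complex.exp ((Complex.I - s) * (β * Real.exp (ρ*t₁) : ℝ))‖
        ≤ Real.exp (-(β*Real.exp (ρ*t₁)*s)) + Real.exp (-(β*Real.exp (ρ*t₂)*s)) := by
      calc _ ≤ ‖Complex.exp ((Complex.I - s) * ((β * Real.exp (ρ*t₂) : ℝ):ℂ))‖
            + ‖Complex.exp ((Complex.I - s) * ((β * Real.exp (ρ*t₁) : ℝ):ℂ))‖ := norm_sub_le _ _
        _ = Real.exp (-(β*Real.exp (ρ*t₂)*s)) + Real.exp (-(β*Real.exp (ρ*t₁)*s)) := by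
            rw [habsexp, habsexp]
        _ = _ := by ring
    calc s^(r-1) * ‖((β:ℂ)*ρ*(Complex.I - s))⁻¹ *
          (Complex.exp ((Complex.I - s) * (β * Real.exp (ρ*t₂) : ℝ))
            - Complex.exp ((Complex.I - s) * (β * Real.exp (ρ*t₁) : ℝ)))‖
        ≤ s^(r-1) * ((1/(ρ*β)) * (Real.exp (-(β*Real.exp (ρ*t₁)*s))
            + Real.exp (-(β*Real.exp (ρ*t₂)*s)))) := by
          apply mul_le_mul_of_nonneg_left _ (Real.rpow_nonneg (le_of_lt hs) _)
          rw [norm_mul]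
          exact mul_le_mul hinv hdiff (norm_nonneg _) (by positivity)
      _ = Φ s := by rw [hΦdef]; ring
  -- Step 5: assemble
  have hABS : ‖∫ s in Ioi 0, ∫ t in Ioc t₁ t₂, oscG β ρ r t s‖ ≤ ∫ s in Ioi 0, Φ s :=
    MeasureTheory.norm_integral_le_of_norm_le hΦint
      ((ae_restrict_iff' measurableSet_Ioi).2 (ae_of_all _ hbound))
  have hΦval : ∫ s in Ioi 0, Φ s = (1/(ρ*β)) * (Real.Gamma r * (β*Real.exp (ρ*t₁))^(-r)
      + Real.Gamma r * (β*Real.exp (ρ*t₂))^(-r)) := by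
    rw [hΦdef]
    simp only
    rw [MeasureTheory.integral_const_mul, MeasureTheory.integral_add (osc_key_integrable hr (hu t₁))
      (osc_key_integrable hr (hu t₂)), osc_gamma_val hr (hu t₁), osc_gamma_val hr (hu t₂)]
  rw [step1, step2, norm_smul, Real.norm_eq_abs, _root_.abs_of_nonneg (by positivity)]
  calc β ^ r / Real.Gamma r * ‖∫ s in Ioi 0, ∫ t in Ioc t₁ t₂, oscG β ρ r t s‖
      ≤ β ^ r / Real.Gamma r * ((1/(ρ*β)) * (Real.Gamma r * (β*Real.exp (ρ*t₁))^(-r)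
        + Real.Gamma r * (β*Real.exp (ρ*t₂))^(-r))) := by
        apply mul_le_mul_of_nonneg_left _ (by positivity)
        rw [← hΦval]
        exact hABS
    _ = 1/(ρ*β) * (β ^ r * (β*Real.exp (ρ*t₁))^(-r) + β ^ r * (β*Real.exp (ρ*t₂))^(-r)) := by
        field_simp
    _ = 1/(ρ*β) * (Real.exp ((l-ρ)*t₁) + Real.exp ((l-ρ)*t₂)) := by
        rw [osc_pow β ρ l r hβ hρ hrdef t₁, osc_pow β ρ l r hβ hρ hrdef t₂]
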